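/- Let m ≥ 3 and for n ≥ 1 let b_n be the number of permutations π in S_n avoiding 12⋯m as a consecutive pattern with ipk(π) = 0. Then, as an identity of formal power series in x with integer coefficients, (1 − 2x + x^m) · (1 + ∑_{n≥1} b_n x^n) = 1 − x. -/

import Mathlib

/-- The one-line notation of a permutation `π` of `{1,…,n}`, read as a function on 0-based
positions: `permWord π j = π_{j+1}` (values are 1-based; out-of-range positions give `0`). -/
def permWord {n : ℕ} (π : Equiv.Perm (Fin n)) (j : ℕ) : ℕ :=
  if h : j < n then ((π ⟨j, h⟩ : Fin n) : ℕ) + 1 else 0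

/-- `π` contains `σ` as a consecutive pattern: some window of consecutive letters of `π`
has standardization `σ`, i.e. is order-isomorphic to the one-line word of `σ`. -/
def ContainsPat {n m : ℕ} (π : Equiv.Perm (Fin n)) (σ : Equiv.Perm (Fin m)) : Prop :=
  ∃ i : ℕ, i + m ≤ n ∧ ∀ j k : Fin m,
    (permWord π (i + (j : ℕ)) < permWord π (i + (k : ℕ)) ↔ permWord σ j < permWord σ k)

/-- The number of peaks of `π`: 1-based indices `i` with `2 ≤ i ≤ n-1` and
`π_{i-1} < π_i > π_{i+1}`. -/
def pkCount {n : ℕ} (π : Equiv.Perm (Fin n)) : ℕ :=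
  ((Finset.Icc 2 (n - 1)).filter fun i =>
    permWord π (i - 2) < permWord π (i - 1) ∧ permWord π i < permWord π (i - 1)).card

/-- The number of left peaks of `π`: 1-based indices `i ∈ [n-1]` that are peaks,
or `i = 1` with `π_1 > π_2`. -/
def lpkCount {n : ℕ} (π : Equiv.Perm (Fin n)) : ℕ :=
  ((Finset.Icc 1 (n - 1)).filter fun i =>
    (2 ≤ i ∧ permWord π (i - 2) < permWord π (i - 1) ∧ permWord π i < permWord π (i - 1))
      ∨ (i = 1 ∧ permWord π 1 < permWord π 0)).card

/-- The number of peaks of `π⁻¹`. -/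
def ipk {n : ℕ} (π : Equiv.Perm (Fin n)) : ℕ := pkCount π⁻¹

/-- The number of left peaks of `π⁻¹`. -/
def ilpk {n : ℕ} (π : Equiv.Perm (Fin n)) : ℕ := lpkCount π⁻¹

namespace Stmt18Aux

/-- no `r` consecutive `true`s -/
def NoRun (r : ℕ) (s : ℕ → Bool) : Prop := ∀ i : ℕ, ∃ j, j < r ∧ s (i + j) = false

/-- all-false from position `ℓ` on -/
def ZF (ℓ : ℕ) (s : ℕ → Bool) : Prop := ∀ i, ℓ ≤ i → s i = false

def GoodStr (r ℓ : ℕ) : Type := {s : ℕ → Bool // ZF ℓ s ∧ NoRun r s}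

instance (r ℓ : ℕ) : Finite (GoodStr r ℓ) := by
  have hinj : Function.Injective (fun s : GoodStr r ℓ => (fun i : Fin ℓ => s.1 i)) := by
    rintro ⟨s, hs⟩ ⟨t, ht⟩ h
    apply Subtype.ext; funext i
    show s i = t i
    by_cases hi : i < ℓ
    · exact congrFun h ⟨i, hi⟩
    · rw [hs.1 i (le_of_not_gt hi), ht.1 i (le_of_not_gt hi)]
  exact Finite.of_injective _ hinj

noncomputable def cc (r ℓ : ℕ) : ℕ := Nat.card (GoodStr r ℓ)

lemma cc_zero (r : ℕ) (hr : 1 ≤ r) : cc r 0 = 1 := by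
  rw [cc, Nat.card_eq_one_iff_unique]
  constructor
  · constructor
    rintro ⟨s, hs⟩ ⟨t, ht⟩
    apply Subtype.ext; funext i
    show s i = t i
    rw [hs.1 i (Nat.zero_le _), ht.1 i (Nat.zero_le _)]
  · exact ⟨⟨fun _ => false, fun i _ => rfl, fun i => ⟨0, hr, rfl⟩⟩⟩

def consB (b : Bool) (s : ℕ → Bool) : ℕ → Bool := fun i => Nat.casesOn i b s

@[simp] lemma consB_zero (b : Bool) (s : ℕ → Bool) : consB b s 0 = b := rfl
@[simp] lemma consB_succ (b : Bool) (s : ℕ → Bool) (i : ℕ) : consB b s (i+1) = s i := rfl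

lemma consB_head_tail (t : ℕ → Bool) : consB (t 0) (fun i => t (i+1)) = t := by
  funext i; cases i <;> rfl

lemma noRun_consB {r : ℕ} (hr : 1 ≤ r) (b : Bool) (s : ℕ → Bool) :
    NoRun r (consB b s) ↔ NoRun r s ∧ ¬(b = true ∧ ∀ j, j < r - 1 → s j = true) := by
  constructor
  · intro H
    constructor
    · intro i
      obtain ⟨j, hj, hf⟩ := H (i+1)
      exact ⟨j, hj, by simpa [Nat.add_right_comm] using hf⟩
    · rintro ⟨hb, hall⟩
      obtain ⟨j, hj, hf⟩ := H 0
      rcases j with _ | j'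
      · simp [hb] at hf
      · rw [Nat.zero_add, consB_succ, hall j' (by omega)] at hf; exact absurd hf (by simp)
  · rintro ⟨H, hbad⟩ i
    rcases i with _ | i'
    · by_cases hb : b = true
      · push_neg at hbad
        obtain ⟨j, hj, hf⟩ := hbad hb
        exact ⟨j+1, by omega, by simpa [Bool.not_eq_true] using hf⟩
      · exact ⟨0, hr, by simpa [Bool.not_eq_true] using hb⟩
    · obtain ⟨j, hj, hf⟩ := H i'
      refine ⟨j, hj, ?_⟩
      have : i' + 1 + j = (i' + j) + 1 := by omega
      rw [this, consB_succ]; exact hf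

lemma rec_main (r ℓ : ℕ) (hr : 2 ≤ r) (hℓ : 1 ≤ ℓ) :
    cc r ℓ + (if ℓ < r then 0 else if ℓ = r then 1 else cc r (ℓ - r - 1))
      = 2 * cc r (ℓ - 1) := by
  classical
  set X := Bool × GoodStr r (ℓ - 1) with hX
  have hcardX : Nat.card X = 2 * cc r (ℓ - 1) := by
    rw [hX, Nat.card_prod, Nat.card_eq_fintype_card, Fintype.card_bool]; rfl
  set Q : X → Prop := fun p => NoRun r (consB p.1 p.2.1) with hQ
  have hsplit : Nat.card {p : X // Q p} + Nat.card {p : X // ¬ Q p} = Nat.card X := by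
    rw [← Nat.card_sum]
    exact Nat.card_congr (Equiv.sumCompl Q)
  -- good part
  have hgood : Nat.card {p : X // Q p} = cc r ℓ := by
    apply Nat.card_congr
    refine ⟨fun p => ⟨consB p.1.1 p.1.2.1, ?_, p.2⟩,
           fun t => ⟨⟨t.1 0, ⟨fun i => t.1 (i+1), ?_, ?_⟩⟩, ?_⟩, ?_, ?_⟩
    · -- ZF ℓ of cons
      intro i hi
      rcases i with _ | i'
      · omega
      · exact p.1.2.2.1 i' (by omega)
    · -- ZF (ℓ-1) of tail
      intro i hi; exact t.2.1 (i+1) (by omega)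
    · -- NoRun of tail
      intro i
      obtain ⟨j, hj, hf⟩ := t.2.2 (i+1)
      exact ⟨j, hj, by simpa [Nat.add_right_comm] using hf⟩
    · -- Q of reconstructed
      show NoRun r (consB (t.1 0) (fun i => t.1 (i+1)))
      rw [consB_head_tail]; exact t.2.2
    · -- left inverse
      rintro ⟨⟨b, s, hs⟩, hq⟩
      apply Subtype.ext
      simp only []
      refine Prod.ext rfl (Subtype.ext ?_)
      funext i; rfl
    · -- right inverse
      rintro ⟨t, ht⟩
      apply Subtype.ext
      simp only []
      exact consB_head_tail t
  rw [hgood, hcardX] at hsplit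
  -- now characterize the bad part
  have hbadchar : ∀ p : X, ¬ Q p ↔ (p.1 = true ∧ ∀ j, j < r - 1 → p.2.1 j = true) := by
    rintro ⟨b, s, hzf, hnr⟩
    rw [hQ]
    simp only []
    rw [noRun_consB (by omega)]
    constructor
    · intro h
      by_contra hc
      exact h ⟨hnr, hc⟩
    · intro h hc
      exact hc.2 h
  have hbad : Nat.card {p : X // ¬ Q p}
      = (if ℓ < r then 0 else if ℓ = r then 1 else cc r (ℓ - r - 1)) := by
    rw [Nat.card_congr (Equiv.subtypeEquivRight hbadchar)]
    by_cases h1 : ℓ < r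
    · rw [if_pos h1]
      have : IsEmpty {p : X // p.1 = true ∧ ∀ j, j < r - 1 → p.2.1 j = true} := by
        constructor
        rintro ⟨⟨b, s, hzf, hnr⟩, hb, hall⟩
        have h2 : s (ℓ - 1) = true := hall (ℓ-1) (by omega)
        have h3 : s (ℓ - 1) = false := hzf (ℓ-1) le_rfl
        rw [h2] at h3; exact absurd h3 (by simp)
      simp [Nat.card_of_isEmpty]
    · rw [if_neg h1]
      by_cases h2 : ℓ = r
      · rw [if_pos h2]
        rw [Nat.card_eq_one_iff_unique]
        constructor
        · constructor
          rintro ⟨⟨b, s, hzf, hnr⟩, hb, hall⟩ ⟨⟨b', s', hzf', hnr'⟩, hb', hall'⟩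
          apply Subtype.ext
          apply Prod.ext
          · exact hb.trans hb'.symm
          · apply Subtype.ext
            funext i
            show s i = s' i
            by_cases hi : i < r - 1
            · exact (hall i hi).trans (hall' i hi).symm
            · rw [hzf i (by omega), hzf' i (by omega)]
        · refine ⟨⟨⟨true, ⟨fun i => decide (i < r - 1), ?_, ?_⟩⟩, rfl, ?_⟩⟩
          · intro i hi
            simp only [decide_eq_false_iff_not]
            omega
          · intro i
            exact ⟨r - 1, by omega, by simp⟩
          · intro j hj
            simp [hj]
      · rw [if_neg h2]
        have hℓr : r < ℓ := by omega
        apply Nat.card_congr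
        refine ⟨fun p => ⟨fun i => p.1.2.1 (i + r), ?_, ?_⟩,
               fun u => ⟨⟨true, ⟨fun i => if i < r - 1 then true else if i = r - 1 then false
                 else u.1 (i - r), ?_, ?_⟩⟩, rfl, ?_⟩, ?_, ?_⟩
        · -- ZF of dropped
          intro i hi
          exact p.1.2.2.1 (i + r) (by omega)
        · -- NoRun of dropped
          intro i
          obtain ⟨j, hj, hf⟩ := p.1.2.2.2 (i + r)
          exact ⟨j, hj, by simpa [show i + j + r = i + r + j from by omega] using hf⟩
        · -- ZF of constructed
          intro i hi
          have h3 : ¬ (i < r - 1) := by omega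
          have h4 : ¬ (i = r - 1) := by omega
          simp only [if_neg h3, if_neg h4]
          exact u.2.1 (i - r) (by omega)
        · -- NoRun of constructed
          intro i
          by_cases hi : i ≤ r - 1
          · refine ⟨r - 1 - i, by omega, ?_⟩
            have heq : i + (r - 1 - i) = r - 1 := by omega
            simp only [heq]
            simp
          · obtain ⟨j, hj, hf⟩ := u.2.2 (i - r)
            refine ⟨j, hj, ?_⟩
            have h3 : ¬ (i + j < r - 1) := by omega
            have h4 : ¬ (i + j = r - 1) := by omega
            simp only [if_neg h3, if_neg h4]
            have heq : i + j - r = i - r + j := by omega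
            rw [heq]; exact hf
        · -- property of constructed
          intro j hj
          simp [hj]
        · -- left inverse
          rintro ⟨⟨b, s, hzf, hnr⟩, hb, hall⟩
          apply Subtype.ext
          apply Prod.ext
          · simpa using hb.symm
          · apply Subtype.ext
            funext i
            show (if i < r - 1 then true else if i = r - 1 then false else s (i - r + r)) = s i
            by_cases h3 : i < r - 1
            · rw [if_pos h3]; exact (hall i h3).symm
            · by_cases h4 : i = r - 1
              · rw [if_neg h3, if_pos h4]
                -- s (r-1) = false forced
                obtain ⟨j, hj, hf⟩ := hnr 0
                have hjr : j = r - 1 := by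
                  by_contra hc
                  have hlt : j < r - 1 := by omega
                  have hsj : s j = true := hall j hlt
                  rw [Nat.zero_add] at hf
                  simp [hsj] at hf
                rw [Nat.zero_add, hjr] at hf
                rw [h4]; exact hf.symm
              · rw [if_neg h3, if_neg h4]
                congr 1
                omega
        · -- right inverse
          rintro ⟨u, hu⟩
          apply Subtype.ext
          funext i
          show (if i + r < r - 1 then true else if i + r = r - 1 then false else u (i + r - r)) = u i
          have h3 : ¬ (i + r < r - 1) := by omega
          have h4 : ¬ (i + r = r - 1) := by omega
          rw [if_neg h3, if_neg h4]
          congr 1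
          omega
  rw [hbad] at hsplit
  omega


-- ========== permutation side ==========

section Perm
open Equiv

lemma perm_inv_apply_self {α : Type*} (f : Equiv.Perm α) (x : α) : f⁻¹ (f x) = x :=
  f.symm_apply_apply x

lemma perm_apply_inv_self {α : Type*} (f : Equiv.Perm α) (x : α) : f (f⁻¹ x) = x :=
  f.apply_symm_apply x

variable {n m : ℕ}

lemma permWord_lt (π : Equiv.Perm (Fin n)) {a b : ℕ} (ha : a < n) (hb : b < n) :
    permWord π a < permWord π b ↔ ((π ⟨a, ha⟩ : Fin n) : ℕ) < ((π ⟨b, hb⟩ : Fin n) : ℕ) := by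
  simp [permWord, dif_pos ha, dif_pos hb]

lemma permWord_one (j : Fin m) : permWord (1 : Equiv.Perm (Fin m)) (j : ℕ) = (j : ℕ) + 1 := by
  simp [permWord, j.isLt]

lemma ipk_eq_zero_iff (π : Equiv.Perm (Fin n)) :
    ipk π = 0 ↔ ∀ w : ℕ, 1 ≤ w → w + 1 < n →
      ¬ (permWord π⁻¹ (w-1) < permWord π⁻¹ w ∧ permWord π⁻¹ (w+1) < permWord π⁻¹ w) := by
  rw [ipk, pkCount, Finset.card_eq_zero, Finset.filter_eq_empty_iff]
  constructor
  · intro H w h1 h2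
    have hi : w + 1 ∈ Finset.Icc 2 (n-1) := by
      simp only [Finset.mem_Icc]; omega
    have := H hi
    simpa [show w+1-2 = w-1 from by omega, show w+1-1 = w from by omega] using this
  · intro H i hi
    simp only [Finset.mem_Icc] at hi
    have := H (i-1) (by omega) (by omega)
    simpa [show i-1-1 = i-2 from by omega, show i-1+1 = i from by omega] using this

lemma ascend (g : ℕ → ℕ)
    (H : ∀ w, 1 ≤ w → w + 1 < n → g (w-1) < g w → g w < g (w+1)) :
    ∀ b a, a < b → b + 1 < n → g a < g b → g b < g (b+1) := by
  intro b
  induction b using Nat.strong_induction_on with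
  | _ b IH =>
    intro a ha hb hab
    by_cases hc : a = b - 1
    · exact H b (by omega) hb (hc ▸ hab)
    · by_cases hd : g (b-1) < g b
      · exact H b (by omega) hb hd
      · exfalso
        have h1 : g a < g (b-1) := lt_of_lt_of_le hab (le_of_not_gt hd)
        have h2 := IH (b-1) (by omega) a (by omega) (by omega) h1
        rw [show b - 1 + 1 = b from by omega] at h2
        exact hd h2

lemma noPattern (g : ℕ → ℕ)
    (H : ∀ w, 1 ≤ w → w + 1 < n → g (w-1) < g w → g w < g (w+1)) :
    ∀ c b a, a < b → b < c → c < n → g a < g b → g b < g c := by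
  intro c
  induction c using Nat.strong_induction_on with
  | _ c IH =>
    intro b a hab hbc hc hg
    by_cases h : c = b + 1
    · subst h; exact ascend g H b a hab hc hg
    · have h1 : g b < g (c-1) := IH (c-1) (by omega) b a hab (by omega) (by omega) hg
      have h2 := ascend g H (c-1) b (by omega) (by omega) h1
      rw [show c - 1 + 1 = c from by omega] at h2
      exact lt_trans h1 h2

/-- order determined by comparison with the first entry -/
def OrdP (π : Equiv.Perm (Fin n)) : Prop :=
  ∀ p q : Fin n, (p:ℕ) < (q:ℕ) →
    (((π p : Fin n) : ℕ) < ((π q : Fin n) : ℕ) ↔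
      ((π ⟨0, q.pos⟩ : Fin n) : ℕ) < ((π q : Fin n) : ℕ))

end Perm


section Perm2
variable {n m : ℕ}

lemma ordP_of_ipk (π : Equiv.Perm (Fin n)) (hipk : ipk π = 0) : OrdP π := by
  intro p q hpq
  set g : ℕ → ℕ := fun a => if h : a < n then ((π⁻¹ ⟨a, h⟩ : Fin n) : ℕ) else 0 with hgdef
  have hg : ∀ a : Fin n, g ((π a : Fin n) : ℕ) = (a : ℕ) := by
    intro a
    simp only [hgdef, dif_pos (π a).isLt, Fin.eta, perm_inv_apply_self]
  have H : ∀ w, 1 ≤ w → w + 1 < n → g (w-1) < g w → g w < g (w+1) := by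
    intro w h1 h2 h3
    have hnp := (ipk_eq_zero_iff π).1 hipk w h1 h2
    have e1 : permWord π⁻¹ (w-1) = g (w-1) + 1 := by
      simp [permWord, hgdef, show w - 1 < n from by omega]
    have e2 : permWord π⁻¹ w = g w + 1 := by
      simp [permWord, hgdef, show w < n from by omega]
    have e3 : permWord π⁻¹ (w+1) = g (w+1) + 1 := by
      simp [permWord, hgdef, h2]
    rw [e1, e2, e3] at hnp
    have hne : g (w+1) ≠ g w := by
      intro he
      have : (π⁻¹ ⟨w+1, h2⟩ : Fin n) = π⁻¹ ⟨w, by omega⟩ := by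
        apply Fin.ext
        simpa [hgdef, dif_pos h2, dif_pos (show w < n from by omega)] using he
      have := π⁻¹.injective this
      simp [Fin.ext_iff] at this
    omega
  have hq0 : 0 < (q : ℕ) := by omega
  by_cases h0 : ((π ⟨0, q.pos⟩ : Fin n) : ℕ) < ((π q : Fin n) : ℕ)
  · refine iff_of_true ?_ h0
    by_contra hlt
    have hne : ((π q : Fin n) : ℕ) ≠ ((π p : Fin n) : ℕ) := by
      intro he
      have := π.injective (Fin.ext he)
      simp [Fin.ext_iff] at this; omega
    have hqp : ((π q : Fin n) : ℕ) < ((π p : Fin n) : ℕ) := by omega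
    have := noPattern g H ((π p : Fin n) : ℕ) ((π q : Fin n) : ℕ) ((π ⟨0, q.pos⟩ : Fin n) : ℕ)
      h0 hqp (π p).isLt (by rw [hg, hg]; exact hq0)
    rw [hg, hg] at this
    have hz : (((⟨0, q.pos⟩ : Fin n)) : ℕ) = 0 := rfl
    omega
  · refine iff_of_false ?_ h0
    intro hlt
    have hne : ((π q : Fin n) : ℕ) ≠ ((π ⟨0, q.pos⟩ : Fin n) : ℕ) := by
      intro he
      have := π.injective (Fin.ext he)
      simp [Fin.ext_iff] at this; omega
    have hq0' : ((π q : Fin n) : ℕ) < ((π ⟨0, q.pos⟩ : Fin n) : ℕ) := by omega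
    have := noPattern g H ((π ⟨0, q.pos⟩ : Fin n) : ℕ) ((π q : Fin n) : ℕ) ((π p : Fin n) : ℕ)
      hlt hq0' (π ⟨0, q.pos⟩).isLt (by rw [hg, hg]; exact hpq)
    rw [hg, hg] at this
    have hz : (((⟨0, q.pos⟩ : Fin n)) : ℕ) = 0 := rfl
    omega

lemma ipk_of_ordP (π : Equiv.Perm (Fin n)) (hord : OrdP π) : ipk π = 0 := by
  rw [ipk_eq_zero_iff]
  rintro w h1 h2 ⟨hA, hB⟩
  have hwn : w < n := by omega
  have hw1n : w - 1 < n := by omega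
  rw [permWord_lt π⁻¹ hw1n hwn] at hA
  rw [permWord_lt π⁻¹ h2 hwn] at hB
  set q : Fin n := π⁻¹ ⟨w, hwn⟩ with hq
  set p : Fin n := π⁻¹ ⟨w+1, h2⟩ with hp
  set p' : Fin n := π⁻¹ ⟨w-1, hw1n⟩ with hp'
  have hπq : π q = ⟨w, hwn⟩ := perm_apply_inv_self π _
  have hπp : π p = ⟨w+1, h2⟩ := perm_apply_inv_self π _
  have hπp' : π p' = ⟨w-1, hw1n⟩ := perm_apply_inv_self π _
  have i1 := hord p q hB
  have i2 := hord p' q hA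
  have h0q : ((π ⟨0, q.pos⟩ : Fin n) : ℕ) < ((π q : Fin n) : ℕ) := by
    refine i2.1 ?_
    rw [hπp', hπq]
    exact (by omega : w - 1 < w)
  have hfin := i1.2 h0q
  rw [hπp, hπq] at hfin
  have : w + 1 < w := hfin
  omega

/-- the comparison string of a permutation -/
def sOf (π : Equiv.Perm (Fin n)) : ℕ → Bool :=
  fun j => if h : j + 1 < n then
    decide (((π ⟨0, by omega⟩ : Fin n) : ℕ) < ((π ⟨j+1, h⟩ : Fin n) : ℕ)) else false

lemma sOf_spec (π : Equiv.Perm (Fin n)) {j : ℕ} (h : j + 1 < n) :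
    sOf π j = true ↔ ((π ⟨0, by omega⟩ : Fin n) : ℕ) < ((π ⟨j+1, h⟩ : Fin n) : ℕ) := by
  simp [sOf, dif_pos h]

lemma sOf_zf (π : Equiv.Perm (Fin n)) : ZF (n-1) (sOf π) := by
  intro i hi
  simp [sOf, show ¬ (i + 1 < n) from by omega]

lemma contains_iff (hm : 2 ≤ m) (π : Equiv.Perm (Fin n)) :
    ContainsPat π (1 : Equiv.Perm (Fin m)) ↔
    ∃ i, i + m ≤ n ∧ ∀ j, j + 1 < m → permWord π (i+j) < permWord π (i+j+1) := by
  constructor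
  · rintro ⟨i, hi, H⟩
    refine ⟨i, hi, fun j hj => ?_⟩
    have := H ⟨j, by omega⟩ ⟨j+1, hj⟩
    rw [permWord_one, permWord_one] at this
    simp only [] at this
    have h2 : (j : ℕ) + 1 < (j+1) + 1 := by omega
    have := this.2 h2
    simpa [show i + (j+1) = i + j + 1 from by omega] using this
  · rintro ⟨i, hi, H⟩
    have chain : ∀ k j : ℕ, j < k → k < m → permWord π (i+j) < permWord π (i+k) := by
      intro k
      induction k with
      | zero => omega
      | succ k IH =>
        intro j hj hk
        have hstep : permWord π (i+k) < permWord π (i+k+1) := H k (by omega)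
        rcases Nat.lt_or_ge j k with h | h
        · refine lt_trans (IH j h (by omega)) ?_
          rw [show i+(k+1) = i+k+1 from by omega]
          exact hstep
        · have hjk : j = k := by omega
          subst hjk
          rw [show i+(j+1) = i+j+1 from by omega]
          exact hstep
    refine ⟨i, hi, fun j k => ?_⟩
    rw [permWord_one, permWord_one]
    rcases lt_trichotomy (j:ℕ) (k:ℕ) with h | h | h
    · exact iff_of_true (chain k j h k.isLt) (by omega)
    · exact iff_of_false (by rw [show (j:ℕ) = (k:ℕ) from h]; exact lt_irrefl _) (by omega)
    · refine iff_of_false ?_ (by omega)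
      have := chain j k h j.isLt
      omega

lemma avoid_iff_noRun (hm : 3 ≤ m) (hn : 1 ≤ n) (π : Equiv.Perm (Fin n)) (hord : OrdP π) :
    ¬ ContainsPat π (1 : Equiv.Perm (Fin m)) ↔ NoRun (m-1) (sOf π) := by
  rw [contains_iff (by omega) π]
  push_neg
  constructor
  · intro H i
    by_cases hcase : i + m ≤ n
    · obtain ⟨j, hj, hnd⟩ := H i hcase
      refine ⟨j, by omega, ?_⟩
      have hin : i + j + 1 < n := by omega
      have hnd' : ¬ permWord π (i+j) < permWord π (i+j+1) := by omega
      rw [permWord_lt π (by omega) hin] at hnd'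
      by_contra hc
      rw [Bool.not_eq_false, sOf_spec π hin] at hc
      have := (hord ⟨i+j, by omega⟩ ⟨i+j+1, hin⟩ (by simp)).2
      exact hnd' (this hc)
    · exact ⟨m - 2, by omega, sOf_zf π (i + (m-2)) (by omega)⟩
  · intro H i hi
    obtain ⟨j, hj, hf⟩ := H i
    refine ⟨j, by omega, ?_⟩
    have hin : i + j + 1 < n := by omega
    have key : ¬ permWord π (i+j) < permWord π (i+j+1) := by
      rw [permWord_lt π (by omega) hin]
      intro hlt
      have := (hord ⟨i+j, by omega⟩ ⟨i+j+1, hin⟩ (by simp)).1 hlt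
      rw [← sOf_spec π hin] at this
      rw [hf] at this
      exact absurd this (by simp)
    omega

end Perm2


section Perm3
variable {n m : ℕ}

lemma strictMono_le_nat (f : Fin n → Fin n) (hf : StrictMono f) :
    ∀ a (h : a < n), a ≤ ((f ⟨a, h⟩ : Fin n) : ℕ) := by
  intro a
  induction a with
  | zero => intro h; exact Nat.zero_le _
  | succ a IH =>
    intro h
    have h1 := IH (by omega)
    have h2 : f ⟨a, by omega⟩ < f ⟨a+1, h⟩ := hf (by simp [Fin.lt_def])
    have h3 := Fin.lt_def.1 h2
    omega

lemma perm_eq_of_ordIff (π π' : Equiv.Perm (Fin n))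
    (h : ∀ p q : Fin n, (p:ℕ) < (q:ℕ) →
      (((π p : Fin n):ℕ) < ((π q : Fin n):ℕ) ↔ ((π' p : Fin n):ℕ) < ((π' q : Fin n):ℕ))) :
    π = π' := by
  have key : ∀ (σ σ' : Equiv.Perm (Fin n)),
      (∀ p q : Fin n, (p:ℕ) < (q:ℕ) →
        (((σ p : Fin n):ℕ) < ((σ q : Fin n):ℕ) ↔ ((σ' p : Fin n):ℕ) < ((σ' q : Fin n):ℕ))) →
      StrictMono (fun x => σ' (σ⁻¹ x)) := by
    intro σ σ' hh a b hab
    simp only []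
    set p := σ⁻¹ a with hp
    set q := σ⁻¹ b with hq
    have hσp : σ p = a := perm_apply_inv_self σ a
    have hσq : σ q = b := perm_apply_inv_self σ b
    have habn : (a : ℕ) < (b : ℕ) := hab
    have hpq : p ≠ q := by
      intro he; rw [he] at hσp; rw [hσp] at hσq; exact absurd (congrArg Fin.val hσq) (by omega)
    rcases lt_trichotomy (p:ℕ) (q:ℕ) with hlt | heq | hgt
    · have := (hh p q hlt).1 (by rw [hσp, hσq]; exact habn)
      exact this
    · exact absurd (Fin.ext heq) hpq
    · have h2 := hh q p hgt
      have hnl : ¬ ((σ' q : Fin n):ℕ) < ((σ' p : Fin n):ℕ) := by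
        intro hc
        have := h2.2 hc
        rw [hσp, hσq] at this
        omega
      have hne : ((σ' p : Fin n):ℕ) ≠ ((σ' q : Fin n):ℕ) := by
        intro he
        exact hpq (σ'.injective (Fin.ext he))
      show ((σ' p : Fin n):ℕ) < ((σ' q : Fin n):ℕ)
      omega
  have hF := key π π' h
  have hG := key π' π (fun p q hpq => (h p q hpq).symm)
  have hid : ∀ x : Fin n, π' (π⁻¹ x) = x := by
    intro x
    have e1 : (x : ℕ) ≤ ((π' (π⁻¹ x) : Fin n) : ℕ) := by
      have := strictMono_le_nat _ hF (x : ℕ) x.isLt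
      simpa [Fin.eta] using this
    have e2 : ((π' (π⁻¹ x) : Fin n) : ℕ) ≤ ((π (π'⁻¹ (π' (π⁻¹ x))) : Fin n) : ℕ) := by
      have := strictMono_le_nat _ hG ((π' (π⁻¹ x) : Fin n) : ℕ) (π' (π⁻¹ x)).isLt
      simpa [Fin.eta] using this
    rw [perm_inv_apply_self, perm_apply_inv_self] at e2
    exact Fin.ext (by omega)
  ext y
  have := hid (π y)
  rw [perm_inv_apply_self] at this
  exact congrArg Fin.val this.symm

lemma sOf_inj (π π' : Equiv.Perm (Fin n)) (h1 : OrdP π) (h2 : OrdP π')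
    (hs : sOf π = sOf π') : π = π' := by
  apply perm_eq_of_ordIff
  intro p q hpq
  rw [h1 p q hpq, h2 p q hpq]
  have hq1 : (q:ℕ) - 1 + 1 < n := by have := q.isLt; omega
  have k1 := sOf_spec π hq1
  have k2 := sOf_spec π' hq1
  have hqe : (⟨(q:ℕ)-1+1, hq1⟩ : Fin n) = q := Fin.ext (by simp; omega)
  rw [hqe] at k1 k2
  rw [← k1, ← k2, hs]

end Perm3


section Build
variable {n : ℕ}

def cntF (s : ℕ → Bool) (j : ℕ) : ℕ := ((Finset.range j).filter fun x => s x = false).card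
def cntT (s : ℕ → Bool) (j : ℕ) : ℕ := ((Finset.range j).filter fun x => s x = true).card

lemma cntF_succ (s : ℕ → Bool) (j : ℕ) :
    cntF s (j+1) = cntF s j + (if s j = false then 1 else 0) := by
  rw [cntF, cntF, Finset.range_add_one, Finset.filter_insert]
  by_cases h : s j = false
  · rw [if_pos h, if_pos h, Finset.card_insert_of_notMem (by simp)]
  · rw [if_neg h, if_neg h, Nat.add_zero]

lemma cntT_succ (s : ℕ → Bool) (j : ℕ) :
    cntT s (j+1) = cntT s j + (if s j = true then 1 else 0) := by
  rw [cntT, cntT, Finset.range_add_one, Finset.filter_insert]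
  by_cases h : s j = true
  · rw [if_pos h, if_pos h, Finset.card_insert_of_notMem (by simp)]
  · rw [if_neg h, if_neg h, Nat.add_zero]

lemma cnt_sum (s : ℕ → Bool) (j : ℕ) : cntF s j + cntT s j = j := by
  induction j with
  | zero => simp [cntF, cntT]
  | succ j IH =>
    rw [cntF_succ, cntT_succ]
    cases h : s j <;> simp [h] <;> omega

lemma cntF_mono (s : ℕ → Bool) {j j' : ℕ} (h : j ≤ j') : cntF s j ≤ cntF s j' :=
  Finset.card_le_card (Finset.filter_subset_filter _ (Finset.range_subset_range.2 h))

lemma cntT_mono (s : ℕ → Bool) {j j' : ℕ} (h : j ≤ j') : cntT s j ≤ cntT s j' :=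
  Finset.card_le_card (Finset.filter_subset_filter _ (Finset.range_subset_range.2 h))

lemma cntF_strict (s : ℕ → Bool) {j j' : ℕ} (h : j < j') (hs : s j = false) :
    cntF s j < cntF s j' := by
  have h1 : cntF s (j+1) = cntF s j + 1 := by rw [cntF_succ, if_pos hs]
  have h2 := cntF_mono s (show j+1 ≤ j' from h)
  omega

lemma cntT_strict (s : ℕ → Bool) {j j' : ℕ} (h : j < j') (hs : s j = true) :
    cntT s j < cntT s j' := by
  have h1 : cntT s (j+1) = cntT s j + 1 := by rw [cntT_succ, if_pos hs]
  have h2 := cntT_mono s (show j+1 ≤ j' from h)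
  omega

def Fv (s : ℕ → Bool) (k : ℕ) : ℕ → ℕ :=
  fun p => Nat.casesOn p k (fun j => if s j = true then k + 1 + cntT s j else k - 1 - cntF s j)

@[simp] lemma Fv_zero (s : ℕ → Bool) (k : ℕ) : Fv s k 0 = k := rfl
lemma Fv_succ (s : ℕ → Bool) (k : ℕ) (j : ℕ) :
    Fv s k (j+1) = if s j = true then k + 1 + cntT s j else k - 1 - cntF s j := rfl

lemma build (hn : 1 ≤ n) (s : ℕ → Bool) (hzf : ZF (n-1) s) :
    ∃ π : Equiv.Perm (Fin n), OrdP π ∧ sOf π = s := by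
  set k := cntF s (n-1) with hk
  have hkn : k ≤ n - 1 := by
    rw [hk, cntF]
    calc ((Finset.range (n-1)).filter _).card ≤ (Finset.range (n-1)).card :=
          Finset.card_filter_le _ _
      _ = n - 1 := Finset.card_range _
  have hkT : cntT s (n-1) = n - 1 - k := by
    have := cnt_sum s (n-1); omega
  have hF : ∀ j, j < n - 1 → s j = false → cntF s j < k := by
    intro j hj hs
    exact cntF_strict s hj hs
  have hT : ∀ j, j < n - 1 → s j = true → cntT s j < n - 1 - k := by
    intro j hj hs
    have := cntT_strict s hj hs
    omega
  have hFb : ∀ p : ℕ, p < n → Fv s k p < n := by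
    intro p hp
    cases p with
    | zero => simpa using by omega
    | succ j =>
      have hj : j < n - 1 := by omega
      rw [Fv_succ]
      cases hs : s j
      · simp only [hs, Bool.false_eq_true, if_false]
        omega
      · rw [if_pos rfl]
        have := hT j hj hs
        omega
  have hinj : ∀ p q : ℕ, p < n → q < n → Fv s k p = Fv s k q → p = q := by
    intro p q hp hq he
    cases p with
    | zero =>
      cases q with
      | zero => rfl
      | succ j =>
        exfalso
        have hj : j < n - 1 := by omega
        rw [Fv_zero, Fv_succ] at he
        cases hs : s j
        · rw [if_neg (by simp [hs])] at he
          have := hF j hj hs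
          omega
        · rw [if_pos hs] at he
          omega
    | succ j =>
      cases q with
      | zero =>
        exfalso
        have hj : j < n - 1 := by omega
        rw [Fv_succ, Fv_zero] at he
        cases hs : s j
        · rw [if_neg (by simp [hs])] at he
          have := hF j hj hs
          omega
        · rw [if_pos hs] at he
          omega
      | succ j' =>
        have hj : j < n - 1 := by omega
        have hj' : j' < n - 1 := by omega
        rw [Fv_succ, Fv_succ] at he
        congr 1
        cases hs : s j <;> cases hs' : s j'
        · rw [if_neg (by simp [hs]), if_neg (by simp [hs'])] at he
          have b1 := hF j hj hs
          have b2 := hF j' hj' hs'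
          have hcc : cntF s j = cntF s j' := by omega
          rcases lt_trichotomy j j' with hlt | heq | hgt
          · exact absurd (cntF_strict s hlt hs) (by omega)
          · exact heq
          · exact absurd (cntF_strict s hgt hs') (by omega)
        · rw [if_neg (by simp [hs]), if_pos hs'] at he
          have b1 := hF j hj hs
          omega
        · rw [if_pos hs, if_neg (by simp [hs'])] at he
          have b2 := hF j' hj' hs'
          omega
        · rw [if_pos hs, if_pos hs'] at he
          have hcc : cntT s j = cntT s j' := by omega
          rcases lt_trichotomy j j' with hlt | heq | hgt
          · exact absurd (cntT_strict s hlt hs) (by omega)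
          · exact heq
          · exact absurd (cntT_strict s hgt hs') (by omega)
  have hbij : Function.Bijective (fun p : Fin n => (⟨Fv s k (p:ℕ), hFb _ p.isLt⟩ : Fin n)) := by
    apply Finite.injective_iff_bijective.1
    intro p q h
    exact Fin.ext (hinj _ _ p.isLt q.isLt (by simpa [Fin.ext_iff] using h))
  set π : Equiv.Perm (Fin n) := Equiv.ofBijective _ hbij with hπdef
  have hπ : ∀ p : Fin n, ((π p : Fin n) : ℕ) = Fv s k (p:ℕ) := fun p => rfl
  -- key comparison: Fv at a positive position vs anything before it
  have hcmp : ∀ (p j : ℕ), p < j + 1 → j < n - 1 →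
      (s j = true → Fv s k p < Fv s k (j+1)) ∧
      (s j = false → ¬ (Fv s k p < Fv s k (j+1))) := by
    intro p j hpj hj
    constructor
    · intro hs
      rw [Fv_succ, if_pos hs]
      cases p with
      | zero => simp; omega
      | succ j' =>
        have hj'2 : j' < n - 1 := by omega
        rw [Fv_succ]
        cases hs' : s j'
        · rw [if_neg (by simp [hs'])]
          omega
        · rw [if_pos rfl]
          have := cntT_strict s (show j' < j by omega) hs'
          omega
    · intro hs
      rw [Fv_succ, if_neg (by simp [hs])]
      have hcj := hF j hj hs
      cases p with
      | zero => simp; omega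
      | succ j' =>
        have hj'2 : j' < n - 1 := by omega
        rw [Fv_succ]
        cases hs' : s j'
        · rw [if_neg (by simp [hs'])]
          have := cntF_strict s (show j' < j by omega) hs'
          omega
        · rw [if_pos rfl]
          omega
  have hord : OrdP π := by
    intro p q hpq
    rw [hπ p, hπ q]
    have h0 : ((π ⟨0, q.pos⟩ : Fin n) : ℕ) = k := by rw [hπ]; rfl
    rw [h0]
    obtain ⟨j, hj⟩ : ∃ j, (q:ℕ) = j + 1 := ⟨(q:ℕ)-1, by omega⟩
    have hjn : j < n - 1 := by have := q.isLt; omega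
    rw [hj]
    cases hs : s j
    · have h1 := (hcmp (p:ℕ) j (by omega) hjn).2 hs
      have h2 := (hcmp 0 j (by omega) hjn).2 hs
      rw [Fv_zero] at h2
      exact iff_of_false h1 h2
    · have h1 := (hcmp (p:ℕ) j (by omega) hjn).1 hs
      have h2 := (hcmp 0 j (by omega) hjn).1 hs
      rw [Fv_zero] at h2
      exact iff_of_true h1 h2
  refine ⟨π, hord, ?_⟩
  funext j
  by_cases hj : j + 1 < n
  · have hjn : j < n - 1 := by omega
    have : sOf π j = decide (((π ⟨0, by omega⟩ : Fin n) : ℕ) < ((π ⟨j+1, hj⟩ : Fin n) : ℕ)) := by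
      simp [sOf, dif_pos hj]
    rw [this, hπ, hπ]
    have e0 : ((⟨0, by omega⟩ : Fin n) : ℕ) = 0 := rfl
    have e1 : ((⟨j+1, hj⟩ : Fin n) : ℕ) = j + 1 := rfl
    rw [e0, e1, Fv_zero]
    cases hs : s j
    · apply decide_eq_false
      exact (by simpa [Fv_zero] using (hcmp 0 j (by omega) hjn).2 hs)
    · apply decide_eq_true
      exact (by simpa [Fv_zero] using (hcmp 0 j (by omega) hjn).1 hs)
  · have h1 : sOf π j = false := by simp [sOf, hj]
    have h2 : s j = false := hzf j (by omega)
    rw [h1, h2]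

end Build


section Final

lemma card_eq (m n : ℕ) (hm : 3 ≤ m) (hn : 1 ≤ n) :
    Nat.card {π : Equiv.Perm (Fin n) //
        ¬ ContainsPat π (1 : Equiv.Perm (Fin m)) ∧ ipk π = 0}
      = cc (m-1) (n-1) := by
  apply Nat.card_congr
  have hmap : ∀ π : {π : Equiv.Perm (Fin n) //
      ¬ ContainsPat π (1 : Equiv.Perm (Fin m)) ∧ ipk π = 0},
      ZF (n-1) (sOf π.1) ∧ NoRun (m-1) (sOf π.1) := by
    rintro ⟨π, hc, hi⟩
    exact ⟨sOf_zf π, (avoid_iff_noRun hm hn π (ordP_of_ipk π hi)).1 hc⟩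
  refine Equiv.ofBijective (fun π => (⟨sOf π.1, hmap π⟩ : GoodStr (m-1) (n-1))) ⟨?_, ?_⟩
  · rintro ⟨π, hπ⟩ ⟨π', hπ'⟩ h
    have hs : sOf π = sOf π' := congrArg Subtype.val h
    exact Subtype.ext (sOf_inj π π' (ordP_of_ipk π hπ.2) (ordP_of_ipk π' hπ'.2) hs)
  · rintro ⟨s, hzf, hnr⟩
    obtain ⟨π, hord, hsof⟩ := build hn s hzf
    have hi : ipk π = 0 := ipk_of_ordP π hord
    have hc : ¬ ContainsPat π (1 : Equiv.Perm (Fin m)) := by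
      rw [avoid_iff_noRun hm hn π hord, hsof]
      exact hnr
    exact ⟨⟨π, hc, hi⟩, Subtype.ext hsof⟩

end Final

end Stmt18Aux

open PowerSeries in
/-- The generating function identity for the number `b_n` of permutations in `S_n` avoiding
`12⋯m` as a consecutive pattern whose inverse has no peaks (`m ≥ 3`):
`(1 - 2x + x^m) (1 + ∑_{n≥1} b_n xⁿ) = 1 - x` in `ℤ⟦x⟧`. -/
theorem stmt18 (m : ℕ) (hm : 3 ≤ m) :
    ((1 - 2 * X + X ^ m : PowerSeries ℤ)) *
        PowerSeries.mk (fun n => if n = 0 then 1 else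
          (Nat.card {π : Equiv.Perm (Fin n) //
            ¬ ContainsPat π (1 : Equiv.Perm (Fin m)) ∧ ipk π = 0} : ℤ))
      = 1 - X := by
  classical
  set f : ℕ → ℤ := fun n => if n = 0 then 1 else
      (Nat.card {π : Equiv.Perm (Fin n) //
        ¬ ContainsPat π (1 : Equiv.Perm (Fin m)) ∧ ipk π = 0} : ℤ) with hf
  have hf1 : ∀ j, 1 ≤ j → f j = (Stmt18Aux.cc (m-1) (j-1) : ℤ) := by
    intro j hj
    rw [hf]
    simp only [if_neg (by omega : ¬ j = 0)]
    rw [Stmt18Aux.card_eq m j hm hj]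
  have hf0 : f 0 = 1 := by simp [hf]
  ext n
  have hexp : (1 - 2 * X + X ^ m : PowerSeries ℤ) * PowerSeries.mk f
      = PowerSeries.mk f - PowerSeries.mk f * X ^ 1 - PowerSeries.mk f * X ^ 1
        + PowerSeries.mk f * X ^ m := by ring
  rw [hexp]
  simp only [map_add, map_sub, coeff_mul_X_pow', coeff_mk, coeff_one, coeff_X]
  rcases Nat.lt_or_ge n 2 with hn2 | hn2
  · rcases Nat.eq_zero_or_pos n with h0 | h1
    · subst h0
      rw [if_neg (by omega : ¬ 1 ≤ 0), if_neg (by omega : ¬ m ≤ 0),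
        if_pos rfl, if_neg (by omega : ¬ (0:ℕ) = 1), hf0]
      ring
    · have hn1 : n = 1 := by omega
      subst hn1
      rw [if_pos (le_refl 1), if_neg (by omega : ¬ m ≤ 1),
        if_neg (by omega : ¬ (1:ℕ) = 0), if_pos rfl]
      rw [hf1 1 le_rfl, hf0]
      rw [show (1:ℕ) - 1 = 0 from rfl, Stmt18Aux.cc_zero (m-1) (by omega)]
      norm_num
  · have hrec := Stmt18Aux.rec_main (m-1) (n-1) (by omega) (by omega)
    have hrecz := congrArg (Nat.cast : ℕ → ℤ) hrec
    push_cast at hrecz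
    rw [if_pos (by omega : 1 ≤ n), if_neg (by omega : ¬ n = 0), if_neg (by omega : ¬ n = 1)]
    rw [hf1 n (by omega), hf1 (n-1) (by omega)]
    rcases Nat.lt_trichotomy n m with hc | hc | hc
    · rw [if_neg (by omega : ¬ m ≤ n)]
      rw [if_pos (by omega : n - 1 < m - 1)] at hrecz
      omega
    · rw [if_pos (by omega : m ≤ n), show n - m = 0 from by omega, hf0]
      rw [if_neg (by omega : ¬ n - 1 < m - 1), if_pos (by omega : n - 1 = m - 1)] at hrecz
      omega
    · rw [if_pos (by omega : m ≤ n), hf1 (n-m) (by omega)]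
      rw [if_neg (by omega : ¬ n - 1 < m - 1), if_neg (by omega : ¬ n - 1 = m - 1),
        show n - 1 - (m-1) - 1 = n - m - 1 from by omega] at hrecz
      omega
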